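/- Let u, v, w be vertices of the set-graph G_{A^(n)} with n ≥ 2 such that deg(u) < deg(v) < deg(w). Then deg(u) + deg(v) > deg(w). -/

import Mathlib

/-- The set-graph `G_{A^(n)}`: vertices are the nonempty subsets of an `n`-element set,
two distinct vertices being adjacent iff the corresponding subsets intersect. -/
def setGraph (n : ℕ) : SimpleGraph {S : Finset (Fin n) // S.Nonempty} where
  Adj S T := S ≠ T ∧ (S.1 ∩ T.1).Nonempty
  symm := ⟨fun S T h => ⟨h.1.symm, by
    obtain ⟨_, h2⟩ := h
    rwa [Finset.inter_comm]⟩⟩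
  loopless := ⟨fun S h => h.1 rfl⟩

instance (n : ℕ) : DecidableRel (setGraph n).Adj := fun S T =>
  inferInstanceAs (Decidable (S ≠ T ∧ (S.1 ∩ T.1).Nonempty))

lemma card_filter_mem_aux (n : ℕ) (a : Fin n) :
    (Finset.univ.filter (fun T : Finset (Fin n) => a ∈ T)).card = 2 ^ (n - 1) := by
  have hc : (Finset.univ.erase a).card = n - 1 := by
    simp [Finset.card_erase_of_mem, Finset.card_univ]
  rw [← hc, ← Finset.card_powerset (Finset.univ.erase a)]
  apply Finset.card_bij (fun T _ => T.erase a)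
  · intro T hT
    simp [Finset.erase_subset_erase, Finset.subset_univ]
  · intro T hT T' hT' h
    simp only [Finset.mem_filter] at hT hT'
    have := congrArg (insert a) h
    rwa [Finset.insert_erase hT.2, Finset.insert_erase hT'.2] at this
  · intro T hT
    refine ⟨insert a T, ?_, ?_⟩
    · simp
    · rw [Finset.erase_insert]
      simp only [Finset.mem_powerset] at hT
      intro haT
      exact (Finset.mem_erase.mp (hT haT)).1 rfl

lemma card_verts (n : ℕ) :
    Fintype.card {S : Finset (Fin n) // S.Nonempty} = 2 ^ n - 1 := by
  rw [Fintype.card_subtype]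
  have : Finset.univ.filter (fun S : Finset (Fin n) => S.Nonempty)
      = Finset.univ.erase ∅ := by
    ext S
    simp [Finset.nonempty_iff_ne_empty, and_comm]
  rw [this, Finset.card_erase_of_mem (Finset.mem_univ _), Finset.card_univ,
    Fintype.card_finset, Fintype.card_fin]

lemma degree_lb (n : ℕ) (u : {S : Finset (Fin n) // S.Nonempty}) :
    2 ^ (n - 1) - 1 ≤ (setGraph n).degree u := by
  obtain ⟨a, ha⟩ := u.2
  rw [SimpleGraph.degree]
  set s : Finset (Finset (Fin n)) :=
    (Finset.univ.filter (fun T : Finset (Fin n) => a ∈ T)).erase u.1 with hs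
  have hcard : s.card = 2 ^ (n - 1) - 1 := by
    rw [hs, Finset.card_erase_of_mem (by simp [ha]), card_filter_mem_aux]
  rw [← hcard]
  apply Finset.card_le_card_of_injOn
    (fun T => if h : T.Nonempty then ⟨T, h⟩ else u)
  · intro T hT
    simp only [hs, Finset.mem_coe, Finset.mem_erase, Finset.mem_filter] at hT
    have hne : T.Nonempty := ⟨a, hT.2.2⟩
    simp only [Finset.mem_coe, dif_pos hne]
    rw [SimpleGraph.mem_neighborFinset]
    constructor
    · intro h
      exact hT.1 (congrArg Subtype.val h.symm)
    · exact ⟨a, Finset.mem_inter.mpr ⟨ha, hT.2.2⟩⟩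
  · intro T hT T' hT' h
    simp only [hs, Finset.mem_coe, Finset.mem_erase, Finset.mem_filter] at hT hT'
    have hne : T.Nonempty := ⟨a, hT.2.2⟩
    have hne' : T'.Nonempty := ⟨a, hT'.2.2⟩
    simp only [dif_pos hne, dif_pos hne'] at h
    exact congrArg Subtype.val h

theorem stmt_5 (n : ℕ) (hn : 2 ≤ n) (u v w : {S : Finset (Fin n) // S.Nonempty})
    (h1 : (setGraph n).degree u < (setGraph n).degree v)
    (h2 : (setGraph n).degree v < (setGraph n).degree w) :
    (setGraph n).degree w < (setGraph n).degree u + (setGraph n).degree v := by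
  have hub : (setGraph n).degree w < 2 ^ n - 1 := by
    rw [← card_verts n]
    exact SimpleGraph.degree_lt_card_verts w
  have hlu : 2 ^ (n - 1) - 1 ≤ (setGraph n).degree u := degree_lb n u
  have hlv : 2 ^ (n - 1) ≤ (setGraph n).degree v := by
    have h1' := Nat.lt_of_le_of_lt hlu h1
    have hp : 1 ≤ 2 ^ (n - 1) := Nat.one_le_two_pow
    omega
  have hpow : 2 ^ n = 2 ^ (n - 1) * 2 := by
    rw [← pow_succ]; congr 1; omega
  have hp : 1 ≤ 2 ^ (n - 1) := Nat.one_le_two_pow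
  omega
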